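/- Let p be a prime, n ≥ 1, and a_1, …, a_n ∈ ℤ[1/p] with |a_1|_p > 1 and |a_j|_p ≤ |a_1|_p for all 2 ≤ j ≤ n (these conditions hold for the coefficients of the minimal polynomial X^n − a_1X^{n−1} − ⋯ − a_n of any Pisot–Chabauty or Salem–Chabauty number). Define α_0 = a_1 and α_{k+1} = a_1 + a_2/α_k + ⋯ + a_n/α_k^{n−1} in ℚ_p. Then the sequence (α_k) converges in ℚ_p to a limit α satisfying α^n = a_1α^{n−1} + a_2α^{n−2} + ⋯ + a_n and |α|_p = |a_1|_p. -/

import Mathlib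

/-- For `a_1, …, a_n ∈ ℤ[1/p] ⊆ ℚ_p` with `|a_1|_p > 1` and
`|a_j|_p ≤ |a_1|_p` for `2 ≤ j ≤ n`, the sequence `α_0 = a_1`,
`α_{k+1} = a_1 + a_2/α_k + ⋯ + a_n/α_k^(n−1)` converges in `ℚ_p` to a limit `α` with
`α^n = a_1 α^(n−1) + ⋯ + a_n` and `|α|_p = |a_1|_p`. -/
theorem padic_recurrence_tendsto_root (p : ℕ) [Fact p.Prime] (n : ℕ) (hn : 1 ≤ n)
    (a : ℕ → ℚ_[p])
    (haZ : ∀ j, 1 ≤ j → j ≤ n → ∃ m : ℤ, ∃ k : ℕ, a j = (m : ℚ_[p]) / (p : ℚ_[p]) ^ k)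
    (ha1 : 1 < ‖a 1‖)
    (haj : ∀ j, 2 ≤ j → j ≤ n → ‖a j‖ ≤ ‖a 1‖)
    (α : ℕ → ℚ_[p]) (h0 : α 0 = a 1)
    (hrec : ∀ k, α (k + 1) = ∑ j ∈ Finset.Icc 1 n, a j / α k ^ (j - 1)) :
    ∃ L : ℚ_[p], Filter.Tendsto α Filter.atTop (nhds L) ∧
      L ^ n = ∑ j ∈ Finset.Icc 1 n, a j * L ^ (n - j) ∧ ‖L‖ = ‖a 1‖ := by
  set A := ‖a 1‖ with hAdef
  have hA0 : (0:ℝ) < A := lt_trans one_pos ha1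
  have hA1 : (1:ℝ) ≤ A := ha1.le
  -- every α k has norm A
  have hnorm : ∀ k, ‖α k‖ = A := by
    intro k
    induction k with
    | zero => rw [h0]
    | succ k ih =>
      have hk0 : α k ≠ 0 := by
        intro h; rw [h, norm_zero] at ih; exact hA0.ne ih
      have h1mem : (1:ℕ) ∈ Finset.Icc 1 n := Finset.mem_Icc.mpr ⟨le_refl 1, hn⟩
      rw [hrec, ← Finset.add_sum_erase _ _ h1mem]
      have hterm1 : a 1 / α k ^ (1 - 1) = a 1 := by norm_num
      rw [hterm1]
      have hS : ‖∑ j ∈ (Finset.Icc 1 n).erase 1, a j / α k ^ (j - 1)‖ ≤ 1 := by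
        apply IsUltrametricDist.norm_sum_le_of_forall_le_of_nonneg zero_le_one
        intro j hj
        have hj2 : 2 ≤ j := by
          have h1 := Finset.mem_erase.mp hj
          have h2 := (Finset.mem_Icc.mp h1.2).1
          omega
        have hjn : j ≤ n := (Finset.mem_Icc.mp (Finset.mem_erase.mp hj).2).2
        have hja : ‖a j‖ ≤ A := haj j hj2 hjn
        have hpow : A ≤ A ^ (j - 1) := by
          calc A = A ^ 1 := (pow_one A).symm
          _ ≤ A ^ (j - 1) := pow_le_pow_right₀ hA1 (by omega)
        rw [norm_div, norm_pow, ih]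
        rw [div_le_one (lt_of_lt_of_le hA0 hpow)]
        exact hja.trans hpow
      rw [Padic.add_eq_max_of_ne (by rw [← hAdef]; exact fun h => absurd (h ▸ hS) (not_le.mpr ha1))]
      rw [← hAdef]
      exact max_eq_left (hS.trans hA1)
  have hne0 : ∀ k, α k ≠ 0 := by
    intro k h; have := hnorm k; rw [h, norm_zero] at this; exact hA0.ne this
  -- contraction estimate
  have key : ∀ x y : ℚ_[p], ‖x‖ = A → ‖y‖ = A →
      ‖(∑ j ∈ Finset.Icc 1 n, a j / x ^ (j - 1)) - ∑ j ∈ Finset.Icc 1 n, a j / y ^ (j - 1)‖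
        ≤ ‖x - y‖ / A := by
    intro x y hx hy
    have hx0 : x ≠ 0 := fun h => hA0.ne (by rw [← hx, h, norm_zero])
    have hy0 : y ≠ 0 := fun h => hA0.ne (by rw [← hy, h, norm_zero])
    rw [← Finset.sum_sub_distrib]
    apply IsUltrametricDist.norm_sum_le_of_forall_le_of_nonneg
      (div_nonneg (norm_nonneg _) hA0.le)
    intro j hj
    rcases Finset.mem_Icc.mp hj with ⟨hj1, hjn⟩
    rcases Nat.lt_or_ge j 2 with hj2 | hj2
    · -- j = 1 : the terms cancel
      have : j = 1 := by omega
      subst this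
      simp only [Nat.sub_self, pow_zero, div_one, sub_self, norm_zero]
      positivity
    · -- j ≥ 2
      set m := j - 1 with hm
      have hm1 : 1 ≤ m := by omega
      have hxm : x ^ m ≠ 0 := pow_ne_zero _ hx0
      have hym : y ^ m ≠ 0 := pow_ne_zero _ hy0
      have hiden : a j / x ^ m - a j / y ^ m = a j * (y ^ m - x ^ m) / (x ^ m * y ^ m) := by
        field_simp
      -- bound for ‖y^m - x^m‖
      have hgeo : (∑ i ∈ Finset.range m, y ^ i * x ^ (m - 1 - i)) * (y - x) = y ^ m - x ^ m :=
        geom_sum₂_mul y x m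
      have hsum : ‖∑ i ∈ Finset.range m, y ^ i * x ^ (m - 1 - i)‖ ≤ A ^ (m - 1) := by
        apply IsUltrametricDist.norm_sum_le_of_forall_le_of_nonneg (pow_nonneg hA0.le _)
        intro i hi
        have hi' : i ≤ m - 1 := by
          have := Finset.mem_range.mp hi; omega
        rw [norm_mul, norm_pow, norm_pow, hx, hy, ← pow_add]
        rw [Nat.add_sub_cancel' hi']
      have hpowbound : ‖y ^ m - x ^ m‖ ≤ A ^ (m - 1) * ‖y - x‖ := by
        rw [← hgeo, norm_mul]
        exact mul_le_mul_of_nonneg_right hsum (norm_nonneg _)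
      have hja : ‖a j‖ ≤ A := haj j hj2 hjn
      rw [hiden, norm_div, norm_mul, norm_mul, norm_pow, norm_pow, hx, hy]
      have hnum : ‖a j‖ * ‖y ^ m - x ^ m‖ ≤ A ^ m * ‖y - x‖ := by
        calc ‖a j‖ * ‖y ^ m - x ^ m‖ ≤ A * (A ^ (m - 1) * ‖y - x‖) :=
              mul_le_mul hja hpowbound (norm_nonneg _) hA0.le
        _ = A ^ m * ‖y - x‖ := by
              rw [← mul_assoc, ← pow_succ']
              congr 2
              omega
      calc ‖a j‖ * ‖y ^ m - x ^ m‖ / (A ^ m * A ^ m)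
          ≤ A ^ m * ‖y - x‖ / (A ^ m * A ^ m) := by
            apply div_le_div_of_nonneg_right hnum
            positivity
        _ = ‖y - x‖ / A ^ m := mul_div_mul_left _ _ (pow_ne_zero _ hA0.ne')
        _ ≤ ‖y - x‖ / A := by
            apply div_le_div_of_nonneg_left (norm_nonneg _) hA0
            calc A = A ^ 1 := (pow_one A).symm
            _ ≤ A ^ m := pow_le_pow_right₀ hA1 hm1
        _ = ‖x - y‖ / A := by rw [norm_sub_rev]
  -- geometric decay of successive differences
  have hdecay : ∀ k, ‖α (k + 1) - α k‖ ≤ ‖α 1 - α 0‖ * (1 / A) ^ k := by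
    intro k
    induction k with
    | zero => simp
    | succ k ih =>
      have h1 : ‖α (k + 2) - α (k + 1)‖ ≤ ‖α (k + 1) - α k‖ / A := by
        have h := key (α (k + 1)) (α k) (hnorm (k + 1)) (hnorm k)
        rw [← hrec (k + 1), ← hrec k] at h
        exact h
      calc ‖α (k + 2) - α (k + 1)‖ ≤ ‖α (k + 1) - α k‖ / A := h1
      _ ≤ ‖α 1 - α 0‖ * (1 / A) ^ k / A :=
          div_le_div_of_nonneg_right ih hA0.le
      _ = ‖α 1 - α 0‖ * (1 / A) ^ (k + 1) := by
          rw [pow_succ]; ring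
  -- Cauchy and convergence
  have hcauchy : CauchySeq α := by
    apply cauchySeq_of_le_geometric (1 / A) (‖α 1 - α 0‖) (by rw [div_lt_one hA0]; exact ha1)
    intro k
    rw [dist_eq_norm, norm_sub_rev]
    exact hdecay k
  obtain ⟨L, hL⟩ := cauchySeq_tendsto_of_complete hcauchy
  have hLnorm : ‖L‖ = A := by
    have h1 : Filter.Tendsto (fun k => ‖α k‖) Filter.atTop (nhds ‖L‖) := hL.norm
    have h2 : Filter.Tendsto (fun k => ‖α k‖) Filter.atTop (nhds A) := by
      simp only [hnorm]; exact tendsto_const_nhds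
    exact tendsto_nhds_unique h1 h2
  have hL0 : L ≠ 0 := fun h => hA0.ne (by rw [← hLnorm, h, norm_zero])
  -- the limit satisfies the fixed point equation
  have hfix : L = ∑ j ∈ Finset.Icc 1 n, a j / L ^ (j - 1) := by
    have h1 : Filter.Tendsto (fun k => α (k + 1)) Filter.atTop (nhds L) :=
      hL.comp (Filter.tendsto_add_atTop_nat 1)
    have h2 : Filter.Tendsto (fun k => ∑ j ∈ Finset.Icc 1 n, a j / α k ^ (j - 1))
        Filter.atTop (nhds (∑ j ∈ Finset.Icc 1 n, a j / L ^ (j - 1))) := by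
      apply tendsto_finset_sum
      intro j _
      exact Filter.Tendsto.div tendsto_const_nhds (hL.pow (j - 1)) (pow_ne_zero _ hL0)
    have h3 : Filter.Tendsto (fun k => α (k + 1)) Filter.atTop
        (nhds (∑ j ∈ Finset.Icc 1 n, a j / L ^ (j - 1))) := by
      simpa only [← hrec] using h2
    exact tendsto_nhds_unique h1 h3
  refine ⟨L, hL, ?_, hLnorm⟩
  calc L ^ n = L ^ (n - 1) * L := by rw [← pow_succ, Nat.sub_add_cancel hn]
  _ = L ^ (n - 1) * ∑ j ∈ Finset.Icc 1 n, a j / L ^ (j - 1) := by rw [← hfix]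
  _ = ∑ j ∈ Finset.Icc 1 n, L ^ (n - 1) * (a j / L ^ (j - 1)) := Finset.mul_sum _ _ _
  _ = ∑ j ∈ Finset.Icc 1 n, a j * L ^ (n - j) := by
      apply Finset.sum_congr rfl
      intro j hj
      rcases Finset.mem_Icc.mp hj with ⟨hj1, hjn⟩
      have h : n - 1 = (n - j) + (j - 1) := by omega
      rw [h, pow_add]
      field_simp
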